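/- Let f : ℝ³ → ℝ be given in cylindrical-type coordinates by f(ρ) = c / cosh⁴(3aρ) for constants a, c > 0, integrated against the volume element of the t = T slice of the metric (2), whose volume density is proportional to cosh⁴(aT)·cosh^{4/3}(3aρ)·sinh(3aρ). Then the spatial average over the slice vanishes: lim_{R→∞} (∫₀^R f(ρ)·cosh^{4/3}(3aρ)·sinh(3aρ) dρ) / (∫₀^R cosh^{4/3}(3aρ)·sinh(3aρ) dρ) = 0. -/

import Mathlib

open Real Filter intervalIntegral

-- derivative of cosh(3aρ)^p / (3a p)-ish helper
lemma hasDerivAt_cosh_rpow (a p : ℝ) (x : ℝ) :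
    HasDerivAt (fun ρ : ℝ => Real.cosh (3 * a * ρ) ^ p)
      (p * Real.cosh (3 * a * x) ^ (p - 1) * (Real.sinh (3 * a * x) * (3 * a))) x := by
  have h1 : HasDerivAt (fun ρ : ℝ => 3 * a * ρ) (3 * a) x := by
    simpa using (hasDerivAt_id x).const_mul (3 * a)
  have h2 : HasDerivAt Real.cosh (Real.sinh (3 * a * x)) (3 * a * x) := Real.hasDerivAt_cosh _
  have h3 := h2.comp x h1
  have h4 := (Real.hasDerivAt_rpow_const (p := p)
    (x := Real.cosh (3 * a * x)) (Or.inl (ne_of_gt (Real.cosh_pos _)))).comp x h3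
  simpa [Function.comp_def, mul_assoc] using h4

/-- the spatial average of `f(ρ) = c / cosh⁴(3aρ)` over the slice
`t = T` of the non-singular model, with radial volume weight
`cosh^{4/3}(3aρ) sinh(3aρ)`, vanishes. -/
theorem average_energy_density_vanishes (a c : ℝ) (ha : 0 < a) (hc : 0 < c) :
    Filter.Tendsto (fun R : ℝ =>
      (∫ ρ in (0:ℝ)..R, (c / Real.cosh (3 * a * ρ) ^ 4) *
        (Real.cosh (3 * a * ρ) ^ ((4:ℝ)/3) * Real.sinh (3 * a * ρ))) /
      (∫ ρ in (0:ℝ)..R,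
        Real.cosh (3 * a * ρ) ^ ((4:ℝ)/3) * Real.sinh (3 * a * ρ)))
      Filter.atTop (nhds 0) := by
  have hcont : Continuous fun ρ : ℝ => Real.cosh (3 * a * ρ) :=
    Real.continuous_cosh.comp (continuous_const.mul continuous_id)
  have hpos : ∀ x : ℝ, 0 < Real.cosh (3 * a * x) := fun x => Real.cosh_pos _
  -- denominator formula
  have hden : ∀ R : ℝ, (∫ ρ in (0:ℝ)..R,
      Real.cosh (3 * a * ρ) ^ ((4:ℝ)/3) * Real.sinh (3 * a * ρ))
      = (Real.cosh (3 * a * R) ^ ((7:ℝ)/3) - 1) / (7 * a) := by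
    intro R
    have hD : ∀ x ∈ Set.uIcc (0:ℝ) R, HasDerivAt
        (fun ρ : ℝ => Real.cosh (3 * a * ρ) ^ ((7:ℝ)/3) / (7 * a))
        (Real.cosh (3 * a * x) ^ ((4:ℝ)/3) * Real.sinh (3 * a * x)) x := by
      intro x _
      have := (hasDerivAt_cosh_rpow a (7/3) x).div_const (7 * a)
      refine this.congr_deriv ?_
      have : (7:ℝ)/3 - 1 = 4/3 := by norm_num
      rw [this]
      field_simp
    have hint : IntervalIntegrable
        (fun ρ : ℝ => Real.cosh (3 * a * ρ) ^ ((4:ℝ)/3) * Real.sinh (3 * a * ρ))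
        MeasureTheory.volume 0 R := by
      apply Continuous.intervalIntegrable
      exact (hcont.rpow_const (fun x => Or.inl (ne_of_gt (hpos x)))).mul
        (Real.continuous_sinh.comp (continuous_const.mul continuous_id))
    rw [intervalIntegral.integral_eq_sub_of_hasDerivAt hD hint]
    simp [Real.cosh_zero, Real.one_rpow]
    ring
  -- numerator formula
  have hnum : ∀ R : ℝ, (∫ ρ in (0:ℝ)..R, (c / Real.cosh (3 * a * ρ) ^ 4) *
      (Real.cosh (3 * a * ρ) ^ ((4:ℝ)/3) * Real.sinh (3 * a * ρ)))
      = (c - c * Real.cosh (3 * a * R) ^ (-(5:ℝ)/3)) / (5 * a) := by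
    intro R
    have hrw : ∀ x : ℝ, (c / Real.cosh (3 * a * x) ^ 4) *
        (Real.cosh (3 * a * x) ^ ((4:ℝ)/3) * Real.sinh (3 * a * x))
        = c * (Real.cosh (3 * a * x) ^ (-(8:ℝ)/3) * Real.sinh (3 * a * x)) := by
      intro x
      have h8 : Real.cosh (3 * a * x) ^ (-(8:ℝ)/3)
          = Real.cosh (3 * a * x) ^ ((4:ℝ)/3) / Real.cosh (3 * a * x) ^ (4:ℕ) := by
        rw [← Real.rpow_natCast (Real.cosh (3 * a * x)) 4, ← Real.rpow_sub (hpos x)]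
        norm_num
      rw [h8]
      have h0 : Real.cosh (3 * a * x) ^ (4:ℕ) ≠ 0 := pow_ne_zero _ (ne_of_gt (hpos x))
      field_simp
    have hD : ∀ x ∈ Set.uIcc (0:ℝ) R, HasDerivAt
        (fun ρ : ℝ => -c * Real.cosh (3 * a * ρ) ^ (-(5:ℝ)/3) / (5 * a))
        ((c / Real.cosh (3 * a * x) ^ 4) *
          (Real.cosh (3 * a * x) ^ ((4:ℝ)/3) * Real.sinh (3 * a * x))) x := by
      intro x _
      have := (((hasDerivAt_cosh_rpow a (-(5:ℝ)/3) x).const_mul (-c)).div_const (5 * a))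
      refine this.congr_deriv ?_
      rw [hrw x]
      have h58 : -(5:ℝ)/3 - 1 = -(8:ℝ)/3 := by norm_num
      rw [h58]
      field_simp
    have hint : IntervalIntegrable
        (fun ρ : ℝ => (c / Real.cosh (3 * a * ρ) ^ 4) *
          (Real.cosh (3 * a * ρ) ^ ((4:ℝ)/3) * Real.sinh (3 * a * ρ)))
        MeasureTheory.volume 0 R := by
      apply Continuous.intervalIntegrable
      exact ((continuous_const.div (hcont.pow 4) (fun x => pow_ne_zero _ (ne_of_gt (hpos x)))).mul
        ((hcont.rpow_const (fun x => Or.inl (ne_of_gt (hpos x)))).mul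
        (Real.continuous_sinh.comp (continuous_const.mul continuous_id))))
    rw [intervalIntegral.integral_eq_sub_of_hasDerivAt hD hint]
    simp [Real.cosh_zero, Real.one_rpow]
    ring
  simp only [hnum, hden]
  have h3a : Tendsto (fun R : ℝ => 3 * a * R) atTop atTop := by
    apply Filter.Tendsto.const_mul_atTop (by positivity : (0:ℝ) < 3 * a) tendsto_id
  have hexp_top : Tendsto (fun x : ℝ => Real.exp x / 2) atTop atTop :=
    Real.tendsto_exp_atTop.atTop_div_const two_pos
  have hcoshx_top : Tendsto Real.cosh atTop atTop := by
    apply tendsto_atTop_mono _ hexp_top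
    intro x
    rw [Real.cosh_eq]
    have := Real.exp_pos (-x)
    linarith
  have hcosh_top : Tendsto (fun R : ℝ => Real.cosh (3 * a * R)) atTop atTop :=
    hcoshx_top.comp h3a
  have hden_top : Tendsto (fun R : ℝ =>
      (Real.cosh (3 * a * R) ^ ((7:ℝ)/3) - 1) / (7 * a)) atTop atTop := by
    apply Filter.Tendsto.atTop_div_const (by positivity : (0:ℝ) < 7 * a)
    apply tendsto_atTop_add_const_right
    exact (tendsto_rpow_atTop (by norm_num : (0:ℝ) < 7/3)).comp hcosh_top
  have hzero : Tendsto (fun R : ℝ => Real.cosh (3 * a * R) ^ (-(5:ℝ)/3)) atTop (nhds 0) := by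
    have : (-(5:ℝ)/3) = -((5:ℝ)/3) := by norm_num
    rw [this]
    exact (tendsto_rpow_neg_atTop (by norm_num : (0:ℝ) < 5/3)).comp hcosh_top
  have hnum_lim : Tendsto (fun R : ℝ =>
      (c - c * Real.cosh (3 * a * R) ^ (-(5:ℝ)/3)) / (5 * a)) atTop
      (nhds ((c - c * 0) / (5 * a))) :=
    (tendsto_const_nhds.sub (hzero.const_mul c)).div_const _
  exact hnum_lim.div_atTop hden_top
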